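/- arXiv:2205.00930 — 2 statements merged into one kernel-verified Lean document; each statement's English description precedes it below -/
import Mathlib

section
/- Let f be a probability density on ℝ symmetric about 0 (f(-z) = f(z)), and let w : ℝ → [0,∞) be an even weight function, weakly increasing on [0,∞), with w(0) = 0 and normalizing constant K = ∫ w f dz ∈ (0,∞). Define the non-local density f^{NL}(z) = w(z)f(z)/K with c.d.f. F^{NL}, and let F be the c.d.f. of f. Then F(z) ≥ F^{NL}(z) for all z ≥ 0, and F(z) ≤ F^{NL}(z) for all z ≤ 0. -/
open MeasureTheory Set

/-- For a symmetric density `f` and a proper weight `w` (even, `w 0 = 0`, weakly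
increasing on `[0,∞)`), the c.d.f. of the non-local density `w f / K` is below the
c.d.f. of `f` on `[0,∞)` and above it on `(-∞,0]`. -/
theorem nonlocal_cdf_comparison_symmetric
    (f w : ℝ → ℝ)
    (hf_nonneg : ∀ z, 0 ≤ f z)
    (hf_int : Integrable f)
    (hf_one : ∫ z, f z = 1)
    (hf_symm : ∀ z, f (-z) = f z)
    (hw_nonneg : ∀ z, 0 ≤ w z)
    (hw_even : ∀ z, w (-z) = w z)
    (hw_zero : w 0 = 0)
    (hw_mono : MonotoneOn w (Ici (0:ℝ)))
    (hwf_int : Integrable (fun z => w z * f z))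
    (K : ℝ) (hK : K = ∫ z, w z * f z) (hKpos : 0 < K)
    (F FNL : ℝ → ℝ)
    (hF : ∀ z, F z = ∫ x in Iic z, f x)
    (hFNL : ∀ z, FNL z = ∫ x in Iic z, w x * f x / K) :
    (∀ z ≥ (0:ℝ), FNL z ≤ F z) ∧ (∀ z ≤ (0:ℝ), F z ≤ FNL z) := by
  set g : ℝ → ℝ := fun x => (w x - K) * f x with hg
  have hg_eq : g = fun x => w x * f x - K * f x := by funext x; simp [hg]; ring
  have hg_int : Integrable g := by
    rw [hg_eq]; exact hwf_int.sub (hf_int.const_mul K)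
  have hg_even : ∀ x, g (-x) = g x := by
    intro x; simp [hg, hw_even, hf_symm]
  have hg_total : ∫ x, g x = 0 := by
    rw [hg_eq, integral_sub hwf_int (hf_int.const_mul K), integral_const_mul, hf_one, ← hK]
    ring
  have hhalf : ∫ x in Ioi (0:ℝ), g x = 0 := by
    have h1 : ∫ x in Iic (0:ℝ), g x = ∫ x in Ioi (0:ℝ), g x := by
      have := integral_comp_neg_Ioi (c := (0:ℝ)) (f := g)
      simp only [neg_zero] at this
      rw [← this]
      congr 1; funext x; exact hg_even x
    have h2 := intervalIntegral.integral_Iic_add_Ioi (b := (0:ℝ)) hg_int.integrableOn hg_int.integrableOn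
    rw [hg_total] at h2
    linarith
  have hG : ∀ z ≥ (0:ℝ), 0 ≤ ∫ x in Ioi z, g x := by
    intro z hz
    by_cases hc : K ≤ w z
    · apply setIntegral_nonneg measurableSet_Ioi
      intro x hx
      have hwx : w z ≤ w x := hw_mono hz (le_of_lt (lt_of_le_of_lt hz hx)) (le_of_lt hx)
      exact mul_nonneg (by linarith) (hf_nonneg x)
    · push_neg at hc
      have hsplit : (∫ x in Ioc 0 z, g x) + ∫ x in Ioi z, g x = ∫ x in Ioi (0:ℝ), g x := by
        rw [← setIntegral_union (Ioc_disjoint_Ioi le_rfl) measurableSet_Ioi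
          hg_int.integrableOn hg_int.integrableOn, Ioc_union_Ioi_eq_Ioi hz]
      have hneg : ∫ x in Ioc 0 z, g x ≤ 0 := by
        apply setIntegral_nonpos measurableSet_Ioc
        intro x hx
        have hwx : w x ≤ w z := hw_mono (le_of_lt hx.1) hz hx.2
        exact mul_nonpos_of_nonpos_of_nonneg (by linarith) (hf_nonneg x)
      linarith [hsplit, hhalf]
  have key : ∀ z, F z - FNL z = -(1/K) * ∫ x in Iic z, g x := by
    intro z
    have hFNL' : FNL z = (∫ x in Iic z, w x * f x) / K := by
      rw [hFNL z, integral_div]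
    have hgz : ∫ x in Iic z, g x
        = (∫ x in Iic z, w x * f x) - K * ∫ x in Iic z, f x := by
      rw [hg_eq, integral_sub hwf_int.integrableOn (hf_int.const_mul K).integrableOn,
        integral_const_mul]
    rw [hF z, hFNL', hgz]
    field_simp
    ring
  constructor
  · intro z hz
    have h2 := intervalIntegral.integral_Iic_add_Ioi (b := z) hg_int.integrableOn hg_int.integrableOn
    rw [hg_total] at h2
    have hIic : ∫ x in Iic z, g x ≤ 0 := by linarith [hG z hz]
    have := key z
    nlinarith [one_div_pos.mpr hKpos]
  · intro z hz
    have h1 : ∫ x in Iic z, g x = ∫ x in Ioi (-z), g x := by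
      have := integral_comp_neg_Ioi (c := (-z)) (f := g)
      simp only [neg_neg] at this
      rw [← this]
      congr 1; funext x; exact hg_even x
    have hIic : 0 ≤ ∫ x in Iic z, g x := by
      rw [h1]; exact hG (-z) (by linarith)
    have := key z
    nlinarith [one_div_pos.mpr hKpos]
end

section
/- Under the hypotheses of the previous setup (w proper weight, f₁ a density, K its normalizing constant, g = 1 - w/K, H(z) = ∫_{-∞}^z g f₁), let S = {z : w(z) ≤ K} and suppose S ⊆ A = [z̲, z̄]. Then H(z̄) ≥ 0 and H(z̲) ≤ 0, hence F₁(z̄) - F₁^{NL}(z̄) + F₁^{NL}(z̲) - F₁(z̲) ≥ 0 (Proposition 2's key inequality). -/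
open MeasureTheory Set

/-- Proposition 2's key inequality: if the sublevel set `S = {z : w z ≤ K}` is contained
in the acceptance region `A = [z̲, z̄]`, then `H(z̄) ≥ 0`, `H(z̲) ≤ 0`, and hence
`F₁(z̄) - F₁^{NL}(z̄) + F₁^{NL}(z̲) - F₁(z̲) ≥ 0`. -/
theorem proposition_two_key_inequality
    (f₁ w : ℝ → ℝ)
    (hw_nonneg : ∀ z, 0 ≤ w z)
    (hw_even : ∀ z, w (-z) = w z)
    (hw_zero : w 0 = 0)
    (hw_mono : MonotoneOn w (Ici (0:ℝ)))
    (hf_nonneg : ∀ z, 0 ≤ f₁ z)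
    (hf_int : Integrable f₁)
    (hf_one : ∫ z, f₁ z = 1)
    (hwf_int : Integrable (fun z => w z * f₁ z))
    (K : ℝ) (hK : K = ∫ z, w z * f₁ z) (hKpos : 0 < K)
    (g : ℝ → ℝ) (hg : ∀ z, g z = 1 - w z / K)
    (H : ℝ → ℝ) (hH : ∀ z, H z = ∫ x in Iic z, g x * f₁ x)
    (F₁ F₁NL : ℝ → ℝ)
    (hF₁ : ∀ z, F₁ z = ∫ x in Iic z, f₁ x)
    (hF₁NL : ∀ z, F₁NL z = ∫ x in Iic z, w x * f₁ x / K)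
    (zl zu : ℝ) (hzlu : zl ≤ zu)
    (hS : {z : ℝ | w z ≤ K} ⊆ Icc zl zu) :
    0 ≤ H zu ∧ H zl ≤ 0 ∧ F₁ zu - F₁NL zu + F₁NL zl - F₁ zl ≥ 0 := by
  have heq : (fun z => g z * f₁ z) = fun z => f₁ z - w z * f₁ z / K := by
    funext z; rw [hg]; ring
  have hφ_int : Integrable (fun z => g z * f₁ z) := by
    rw [heq]; exact hf_int.sub (hwf_int.div_const K)
  have htot : ∫ z, g z * f₁ z = 0 := by
    rw [heq, integral_sub hf_int (hwf_int.div_const K), hf_one, integral_div, ← hK,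
      div_self hKpos.ne', sub_self]
  have hsign : ∀ z, z ∉ Icc zl zu → g z * f₁ z ≤ 0 := by
    intro z hz
    have hw : K < w z := by
      by_contra h
      push_neg at h
      exact hz (hS h)
    have hgz : g z ≤ 0 := by
      rw [hg]
      have : 1 ≤ w z / K := (one_le_div hKpos).mpr hw.le
      linarith
    exact mul_nonpos_iff.mpr (Or.inr ⟨hgz, hf_nonneg z⟩)
  have hHu : 0 ≤ H zu := by
    rw [hH]
    have hsplit : (∫ x in Iic zu, g x * f₁ x) + ∫ x in Ioi zu, g x * f₁ x = ∫ x, g x * f₁ x :=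
      intervalIntegral.integral_Iic_add_Ioi hφ_int.integrableOn hφ_int.integrableOn
    rw [htot] at hsplit
    have htail : ∫ x in Ioi zu, g x * f₁ x ≤ 0 := by
      apply setIntegral_nonpos measurableSet_Ioi
      intro x hx
      exact hsign x (fun h => absurd h.2 (not_le.mpr hx))
    linarith
  have hHl : H zl ≤ 0 := by
    rw [hH, integral_Iic_eq_integral_Iio]
    apply setIntegral_nonpos measurableSet_Iio
    intro x hx
    exact hsign x (fun h => absurd h.1 (not_le.mpr hx))
  have hdiff : ∀ z, F₁ z - F₁NL z = H z := by
    intro z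
    rw [hF₁, hF₁NL, hH,
      ← integral_sub hf_int.integrableOn ((hwf_int.div_const K).integrableOn)]
    congr 1; funext x; rw [hg]; ring
  refine ⟨hHu, hHl, ?_⟩
  have h1 := hdiff zu
  have h2 := hdiff zl
  linarith
end
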